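/- For all dominant weights λ = (λ₁,λ₂) and μ = (μ₁,μ₂) in (ℤ^{≥0})², the symmetric orbit functions of A₂ satisfy the continuous orthogonality relation ∫_T C_λ(a₁,a₂) · conj(C_μ(a₁,a₂)) da₁ da₂ = δ_{λ,μ} / h_λ, where the integral is the Lebesgue integral over T, conj denotes complex conjugation, and δ_{λ,μ} is the Kronecker delta. -/

import Mathlib

open MeasureTheory Real

noncomputable section

/-- The fundamental domain `T` of the affine Weyl group of `A₂` in coroot coordinates. -/
def T : Set (ℝ × ℝ) :=
  {a | 0 ≤ 2 * a.1 - a.2 ∧ 0 ≤ 2 * a.2 - a.1 ∧ a.1 + a.2 ≤ 1}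

/-- The order `h_λ` of the stabilizer of the dominant weight `λ` for `A₂`. -/
def hwt (l : ℕ × ℕ) : ℕ :=
  if l.1 = 0 ∧ l.2 = 0 then 6
  else if l.1 = 0 ∨ l.2 = 0 then 2
  else 1

/-- The symmetric orbit function `C_{(λ₁,λ₂)}` of `A₂`. -/
def Cfun (l : ℕ × ℕ) (a : ℝ × ℝ) : ℂ :=
  (hwt l : ℂ)⁻¹ *
    (Complex.exp (2 * π * Complex.I * ((l.1 : ℂ) * a.1 + (l.2 : ℂ) * a.2)) +
     Complex.exp (2 * π * Complex.I * (-(l.1 : ℂ) * a.1 + ((l.1 : ℂ) + l.2) * a.2)) +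
     Complex.exp (2 * π * Complex.I * (((l.1 : ℂ) + l.2) * a.1 - (l.2 : ℂ) * a.2)) +
     Complex.exp (2 * π * Complex.I * ((l.2 : ℂ) * a.1 - ((l.1 : ℂ) + l.2) * a.2)) +
     Complex.exp (2 * π * Complex.I * (-((l.1 : ℂ) + l.2) * a.1 + (l.1 : ℂ) * a.2)) +
     Complex.exp (2 * π * Complex.I * (-(l.2 : ℂ) * a.1 - (l.1 : ℂ) * a.2)))

namespace A2O

def c3 : ℂ := 2 * (π : ℂ) * Complex.I / 3

lemma c3_ne : c3 ≠ 0 := by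
  simp [c3, Complex.ext_iff, Real.pi_ne_zero, Complex.I_ne_zero]

def w (n : ℤ) : ℂ := Complex.exp (c3 * n)

lemma w_add (m n : ℤ) : w (m + n) = w m * w n := by
  rw [w, w, w, ← Complex.exp_add]; push_cast; ring_nf

lemma w_zero : w 0 = 1 := by simp [w]

lemma w_ne (n : ℤ) : w n ≠ 0 := Complex.exp_ne_zero _

lemma w_three (k : ℤ) : w (3 * k) = 1 := by
  rw [w]
  have : c3 * (3 * k : ℤ) = (k : ℂ) * (2 * π * Complex.I) := by
    push_cast [c3]; ring
  rw [this, Complex.exp_int_mul_two_pi_mul_I]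

def g (n : ℤ) : ℂ := if n = 0 then 1 else (w n - 1) / (c3 * n)

lemma g_three {n : ℤ} (h3 : (3:ℤ) ∣ n) : g n = if n = 0 then 1 else 0 := by
  obtain ⟨k, rfl⟩ := h3
  by_cases h : (3:ℤ) * k = 0 <;> simp [g, h, w_three]

def Dcf (a b : ℤ) : ℂ :=
  if b = 0 then (if a = 0 then 1/2 else -(1/(c3*a)) + (w a - 1)/(c3*a)^2)
  else (1/(c3*b)) * (w b * g (a - b) - g a)

lemma intCast_ne {n : ℤ} (h : n ≠ 0) : (n : ℂ) ≠ 0 := Int.cast_ne_zero.2 h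

lemma key (A B : ℤ) (h3 : (3:ℤ) ∣ (A + B)) :
    Dcf A B + Dcf (B-A) B + Dcf A (A-B) + Dcf (B-A) (-A) + Dcf (-B) (A-B) + Dcf (-B) (-A)
      = if A = 0 ∧ B = 0 then 3 else 0 := by
  have g0 : g 0 = 1 := by simp [g]
  by_cases h3A : (3:ℤ) ∣ A
  · -- all w's are 1, all nonzero g's vanish
    have h3B : (3:ℤ) ∣ B := by omega
    have wA : w A = 1 := by obtain ⟨k, rfl⟩ := h3A; exact w_three k
    have wB : w B = 1 := by obtain ⟨k, rfl⟩ := h3B; exact w_three k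
    have wmA : w (-A) = 1 := by
      obtain ⟨k, rfl⟩ := h3A; rw [show -(3*k) = 3 * (-k) by ring]; exact w_three _
    have wmB : w (-B) = 1 := by
      obtain ⟨k, rfl⟩ := h3B; rw [show -(3*k) = 3 * (-k) by ring]; exact w_three _
    have wAB : w (A-B) = 1 := by
      obtain ⟨k, hk⟩ : (3:ℤ) ∣ (A - B) := by omega
      rw [hk]; exact w_three _
    have wBA : w (B-A) = 1 := by
      obtain ⟨k, hk⟩ : (3:ℤ) ∣ (B - A) := by omega
      rw [hk]; exact w_three _
    by_cases hA : A = 0 <;> by_cases hB : B = 0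
    · subst hA; subst hB; norm_num [Dcf]
    · -- A = 0, B ≠ 0
      subst hA
      rw [if_neg (by simp [hB])]
      simp only [Dcf, if_neg hB, zero_sub, sub_zero, neg_eq_zero, if_neg hB, neg_neg,
        if_pos rfl, zero_add]
      rw [g_three h3B, g_three (show (3:ℤ) ∣ -B by omega), g]
      simp only [if_neg hB, if_neg (show (-B:ℤ) ≠ 0 by omega), if_pos rfl, wB, wmB]
      have hBc : (B:ℂ) ≠ 0 := intCast_ne hB
      push_cast
      field_simp
      ring
    · -- B = 0, A ≠ 0
      subst hB
      rw [if_neg (by simp [hA])]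
      have gA : g A = 0 := by rw [g_three h3A, if_neg hA]
      have gmA : g (-A) = 0 := by
        rw [g_three (show (3:ℤ) ∣ -A by omega), if_neg (show (-A:ℤ) ≠ 0 by omega)]
      have hAc : (A:ℂ) ≠ 0 := intCast_ne hA
      simp only [Dcf, if_pos rfl, if_neg hA, zero_sub, sub_zero, neg_zero, neg_neg,
        if_neg (show (-A:ℤ) ≠ 0 by omega), sub_neg_eq_add, neg_add_cancel, sub_self,
        zero_add, zero_sub]
      rw [g0, gA, gmA, wA, wmA]
      push_cast
      field_simp
      ring
    · -- A ≠ 0, B ≠ 0, everything multiple of 3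
      rw [if_neg (by simp [hA])]
      have gA : g A = 0 := by rw [g_three h3A, if_neg hA]
      have gB : g B = 0 := by rw [g_three h3B, if_neg hB]
      have gmA : g (-A) = 0 := by
        rw [g_three (show (3:ℤ) ∣ -A by omega), if_neg (show (-A:ℤ) ≠ 0 by omega)]
      have gmB : g (-B) = 0 := by
        rw [g_three (show (3:ℤ) ∣ -B by omega), if_neg (show (-B:ℤ) ≠ 0 by omega)]
      have hAc : (A:ℂ) ≠ 0 := intCast_ne hA
      have hBc : (B:ℂ) ≠ 0 := intCast_ne hB
      by_cases hE : A = B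
      · subst hE
        simp only [Dcf, sub_self, if_pos rfl, if_neg hA, neg_zero, zero_sub, sub_zero,
          neg_neg, if_neg (show (-A:ℤ) ≠ 0 by omega), sub_neg_eq_add, neg_add_cancel,
          zero_add]
        rw [g0, gA, gmA, wA, wmA]
        push_cast
        field_simp
        ring
      · have gAB : g (A-B) = 0 := by
          rw [g_three (show (3:ℤ) ∣ A-B by omega), if_neg (show A-B ≠ 0 by omega)]
        have gBA : g (B-A) = 0 := by
          rw [g_three (show (3:ℤ) ∣ B-A by omega), if_neg (show B-A ≠ 0 by omega)]
        simp only [Dcf, if_neg hB, if_neg (show A-B ≠ 0 by omega),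
          if_neg (show (-A:ℤ) ≠ 0 by omega), if_neg (show (-B:ℤ) ≠ 0 by omega),
          show B-A-B = -A by ring, show A-(A-B) = B by ring, show B-A-(-A) = B by ring,
          show -B-(A-B) = -A by ring, show -B-(-A) = A-B by ring]
        rw [gA, gB, gmA, gmB, gAB, gBA]
        simp
  · -- generic case: A not a multiple of 3
    have hA : A ≠ 0 := by omega
    have hB : B ≠ 0 := by omega
    have hE : A ≠ B := by omega
    have hABz : A - B ≠ 0 := by omega
    have hBAz : B - A ≠ 0 := by omega
    rw [if_neg (by simp [hA])]
    set x := w A with hx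
    have hx3 : x ^ 3 = 1 := by
      rw [hx, show (3:ℕ) = 1+1+1 by rfl, pow_succ, pow_succ, pow_one, ← w_add, ← w_add,
        show A + A + A = 3 * A by ring]
      exact w_three A
    have xne : x ≠ 0 := w_ne A
    have hsum : x * w B = 1 := by
      rw [hx, ← w_add]
      obtain ⟨k, hk⟩ := h3
      rw [hk]; exact w_three k
    have wB : w B = x ^ 2 := by
      apply mul_left_cancel₀ xne
      rw [hsum]; linear_combination -hx3
    have wmA : w (-A) = x ^ 2 := by
      have h1 : x * w (-A) = 1 := by rw [hx, ← w_add]; simp [w_zero]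
      apply mul_left_cancel₀ xne
      rw [h1]; linear_combination -hx3
    have wmB : w (-B) = x := by
      have h1 : w B * w (-B) = 1 := by rw [← w_add]; simp [w_zero]
      apply mul_left_cancel₀ (w_ne B)
      rw [h1, wB]; linear_combination -hx3
    have wAB : w (A-B) = x ^ 2 := by
      rw [show A - B = A + -B by ring, w_add, ← hx, wmB, sq]
    have wBA : w (B-A) = x := by
      rw [show B - A = B + -A by ring, w_add, wB, wmA]
      linear_combination x * hx3
    have hAc : (A:ℂ) ≠ 0 := intCast_ne hA
    have hBc : (B:ℂ) ≠ 0 := intCast_ne hB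
    have hABc : (A:ℂ) - B ≠ 0 := by
      intro h; apply hABz
      have : ((A - B : ℤ) : ℂ) = 0 := by push_cast; linear_combination h
      exact_mod_cast this
    simp only [Dcf, g, if_neg hA, if_neg hB, if_neg hABz, if_neg hBAz,
      if_neg (show (-A:ℤ) ≠ 0 by omega), if_neg (show (-B:ℤ) ≠ 0 by omega),
      show B-A-B = -A by ring, show A-(A-B) = B by ring, show B-A-(-A) = B by ring,
      show -B-(A-B) = -A by ring, show -B-(-A) = A-B by ring, ← hx]
    rw [wB, wmA, wmB, wAB, wBA]
    push_cast
    ring_nf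
    simp only [show c3 * (B:ℂ) - c3 * (A:ℂ) = -(c3 * ((A:ℂ) - (B:ℂ))) by ring,
        show -(c3 * (B:ℂ)) + c3 * (A:ℂ) = c3 * ((A:ℂ) - (B:ℂ)) by ring,
        show c3 * (A:ℂ) - c3 * (B:ℂ) = c3 * ((A:ℂ) - (B:ℂ)) by ring,
        show -(c3 * (A:ℂ)) + c3 * (B:ℂ) = -(c3 * ((A:ℂ) - (B:ℂ))) by ring,
        mul_inv, inv_neg]
    have key0 : ((A:ℂ)-(B:ℂ))⁻¹ * ((A:ℂ))⁻¹ - ((A:ℂ)-(B:ℂ))⁻¹ * ((B:ℂ))⁻¹ + ((A:ℂ))⁻¹ * ((B:ℂ))⁻¹ = 0 := by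
      field_simp
      ring
    linear_combination (norm := ring) (2 * (c3⁻¹)^2 * (1 - x + x^2 - x^4)) * key0

lemma cexp_cont (c : ℂ) : Continuous fun u : ℝ => Complex.exp (c * u) := by
  fun_prop

lemma g_int (n : ℤ) : ∫ u in (0:ℝ)..1, Complex.exp (c3 * n * u) = g n := by
  by_cases hn : n = 0
  · simp [hn, g]
  · have hc : c3 * (n:ℂ) ≠ 0 := mul_ne_zero c3_ne (intCast_ne hn)
    rw [integral_exp_mul_complex hc, g, if_neg hn, w]
    norm_num

lemma uexp_int (c : ℂ) (hc : c ≠ 0) :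
    ∫ u in (0:ℝ)..1, (u:ℂ) * Complex.exp (c*u)
      = Complex.exp c / c - (Complex.exp c - 1)/c^2 := by
  have hder : ∀ u : ℝ, HasDerivAt
      (fun y : ℝ => (y:ℂ) * Complex.exp (c*y)/c - Complex.exp (c*y)/c^2)
      ((u:ℂ) * Complex.exp (c*u)) u := by
    intro u
    have h1 : HasDerivAt (fun z : ℂ => c * z) c (u:ℂ) := by
      simpa using (hasDerivAt_id (u:ℂ)).const_mul c
    have h2 : HasDerivAt (fun z : ℂ => Complex.exp (c*z))
        (Complex.exp (c*(u:ℂ)) * c) (u:ℂ) := h1.cexp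
    have h3 : HasDerivAt (fun z : ℂ => z * Complex.exp (c*z))
        (1 * Complex.exp (c*(u:ℂ)) + (u:ℂ) * (Complex.exp (c*(u:ℂ)) * c)) (u:ℂ) :=
      (hasDerivAt_id (u:ℂ)).mul h2
    have h4 := (h3.div_const c).sub (h2.div_const (c^2))
    have h5 := h4.comp_ofReal
    convert h5 using 1
    · rfl
    field_simp
    ring
  rw [intervalIntegral.integral_eq_sub_of_hasDerivAt (fun u _ => hder u)
    (by apply Continuous.intervalIntegrable; fun_prop)]
  push_cast
  field_simp
  simp only [mul_zero, Complex.exp_zero]; ring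

lemma inner_int (b : ℤ) (t : ℝ) :
    ∫ v in (0:ℝ)..t, Complex.exp (c3 * b * v)
      = if b = 0 then (t:ℂ) else (Complex.exp (c3*b*t) - 1)/(c3*b) := by
  by_cases hb : b = 0
  · simp [hb]
  · have hc : c3 * (b:ℂ) ≠ 0 := mul_ne_zero c3_ne (intCast_ne hb)
    rw [integral_exp_mul_complex hc, if_neg hb]
    norm_num

lemma Dint (a b : ℤ) :
    (∫ u in (0:ℝ)..1, Complex.exp (c3*a*u) * (∫ v in (0:ℝ)..(1-u), Complex.exp (c3*b*v)))
      = Dcf a b := by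
  simp only [inner_int]
  by_cases hb : b = 0
  · simp only [hb, if_pos rfl]
    by_cases ha : a = 0
    · simp only [ha, Int.cast_zero, mul_zero, zero_mul, Complex.exp_zero, one_mul]
      rw [Dcf]
      simp only [if_pos rfl]
      rw [intervalIntegral.integral_congr
        (g := fun u : ℝ => (1:ℂ) - (u:ℂ)) (fun u _ => by push_cast; ring)]
      rw [intervalIntegral.integral_sub intervalIntegrable_const
        (by apply Continuous.intervalIntegrable; fun_prop)]
      rw [intervalIntegral.integral_ofReal (f := fun u : ℝ => u)]
      simp [integral_id]
      norm_num
    · have hc : c3 * (a:ℂ) ≠ 0 := mul_ne_zero c3_ne (intCast_ne ha)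
      rw [intervalIntegral.integral_congr
        (g := fun u : ℝ => Complex.exp (c3*a*u) - (u:ℂ) * Complex.exp (c3*a*u))
        (fun u _ => by push_cast; ring)]
      rw [intervalIntegral.integral_sub
        (by apply Continuous.intervalIntegrable; fun_prop)
        (by apply Continuous.intervalIntegrable; fun_prop)]
      rw [g_int, uexp_int _ hc, Dcf, if_pos rfl, if_neg ha, g, if_neg ha, w]
      field_simp
      ring
  · simp only [if_neg hb]
    have hcb : c3 * (b:ℂ) ≠ 0 := mul_ne_zero c3_ne (intCast_ne hb)
    have hpt : ∀ u : ℝ, Complex.exp (c3*a*u) * ((Complex.exp (c3*b*(1-(u:ℂ))) - 1)/(c3*b))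
        = (1/(c3*b)) * (Complex.exp (c3*b) * Complex.exp (c3*(a-b:ℤ)*u)
            - Complex.exp (c3*a*u)) := by
      intro u
      have he : Complex.exp (c3*a*u) * Complex.exp (c3*b*(1-(u:ℂ)))
          = Complex.exp (c3*b) * Complex.exp (c3*(a-b:ℤ)*u) := by
        rw [← Complex.exp_add, ← Complex.exp_add]
        congr 1
        push_cast
        ring
      rw [show Complex.exp (c3*a*u) * ((Complex.exp (c3*b*(1-(u:ℂ))) - 1)/(c3*b))
          = (Complex.exp (c3*a*u) * Complex.exp (c3*b*(1-(u:ℂ))) - Complex.exp (c3*a*u))/(c3*b)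
          from by ring, he]
      ring
    simp only [Complex.ofReal_sub, Complex.ofReal_one]
    rw [intervalIntegral.integral_congr (fun u _ => hpt u)]
    rw [intervalIntegral.integral_const_mul]
    rw [intervalIntegral.integral_sub
      (by apply Continuous.intervalIntegrable; fun_prop)
      (by apply Continuous.intervalIntegrable; fun_prop)]
    rw [intervalIntegral.integral_const_mul, g_int, g_int, Dcf, if_neg hb, w]

def Dl : Set (ℝ × ℝ) := {x | 0 ≤ x.1 ∧ 0 ≤ x.2 ∧ x.1 + x.2 ≤ 1}

lemma Dl_closed : IsClosed Dl := by
  have h : Dl = {x : ℝ×ℝ | 0 ≤ x.1} ∩ ({x | 0 ≤ x.2} ∩ {x | x.1 + x.2 ≤ 1}) := rfl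
  rw [h]
  exact (isClosed_le continuous_const continuous_fst).inter
    ((isClosed_le continuous_const continuous_snd).inter
      (isClosed_le (continuous_fst.add continuous_snd) continuous_const))

lemma Dl_meas : MeasurableSet Dl := Dl_closed.measurableSet

lemma Dl_compact : IsCompact Dl := by
  have hsub : Dl ⊆ Set.Icc ((0:ℝ), (0:ℝ)) (1, 1) := by
    rintro ⟨x, y⟩ ⟨h1, h2, h3⟩
    simp only [Set.mem_Icc, Prod.mk_le_mk, Prod.le_def] at *
    constructor <;> constructor <;> linarith
  exact (isCompact_Icc).of_isClosed_subset Dl_closed hsub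

lemma Delta_int (a b : ℤ) :
    ∫ x in Dl, Complex.exp (c3 * (a * x.1 + b * x.2)) = Dcf a b := by
  set h : ℝ × ℝ → ℂ := fun x => Complex.exp (c3 * (a * x.1 + b * x.2)) with hh
  have hcont : Continuous h := by fun_prop
  have hint : Integrable (Dl.indicator h) := by
    rw [integrable_indicator_iff Dl_meas]
    exact hcont.continuousOn.integrableOn_compact Dl_compact
  rw [← integral_indicator Dl_meas]
  rw [Measure.volume_eq_prod] at hint ⊢
  rw [MeasureTheory.integral_prod _ hint]
  have hiter : ∀ u : ℝ, (∫ v, Dl.indicator h (u, v))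
      = (Set.Icc (0:ℝ) 1).indicator
          (fun u : ℝ => Complex.exp (c3*a*u) * (∫ v in (0:ℝ)..(1-u), Complex.exp (c3*b*v))) u := by
    intro u
    by_cases hu : u ∈ Set.Icc (0:ℝ) 1
    · rw [Set.indicator_of_mem hu]
      obtain ⟨hu0, hu1⟩ := hu
      have heq : (fun v => Dl.indicator h (u, v))
          = (Set.Icc (0:ℝ) (1-u)).indicator (fun v => h (u, v)) := by
        funext v
        by_cases hv : 0 ≤ v ∧ v ≤ 1 - u
        · rw [Set.indicator_of_mem (show (u,v) ∈ Dl from ⟨hu0, hv.1, by linarith [hv.2]⟩) h,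
            Set.indicator_of_mem (show v ∈ Set.Icc 0 (1-u) from hv)]
        · have hv' : (u,v) ∉ Dl := by
            intro hmem
            exact hv ⟨hmem.2.1, by linarith [hmem.2.2]⟩
          rw [Set.indicator_of_notMem hv', Set.indicator_of_notMem
            (by simpa [Set.mem_Icc] using hv)]
      rw [heq, integral_indicator measurableSet_Icc,
        MeasureTheory.integral_Icc_eq_integral_Ioc,
        ← intervalIntegral.integral_of_le (by linarith : (0:ℝ) ≤ 1 - u)]
      rw [← intervalIntegral.integral_const_mul]
      apply intervalIntegral.integral_congr
      intro v _
      simp only [hh]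
      rw [← Complex.exp_add]
      congr 1
      push_cast
      ring
    · rw [Set.indicator_of_notMem hu]
      have : ∀ v : ℝ, Dl.indicator h (u, v) = 0 := by
        intro v
        apply Set.indicator_of_notMem
        simp only [Dl, Set.mem_setOf_eq, Set.mem_Icc] at *
        intro ⟨h1, h2, h3⟩
        exact hu ⟨h1, by linarith⟩
      simp [this]
  simp only [hiter]
  rw [integral_indicator measurableSet_Icc, MeasureTheory.integral_Icc_eq_integral_Ioc,
    ← intervalIntegral.integral_of_le (by norm_num : (0:ℝ) ≤ 1)]
  exact Dint a b

def psiL : (ℝ × ℝ) →ₗ[ℝ] (ℝ × ℝ) :=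
  Matrix.toLin (Module.Basis.finTwoProd ℝ) (Module.Basis.finTwoProd ℝ) !![2/3, 1/3; 1/3, 2/3]

lemma psiL_apply (x : ℝ × ℝ) : psiL x = (2/3 * x.1 + 1/3 * x.2, 1/3 * x.1 + 2/3 * x.2) := by
  rw [psiL, Matrix.toLin_finTwoProd_apply]

def psiC : (ℝ × ℝ) →L[ℝ] (ℝ × ℝ) := LinearMap.toContinuousLinearMap psiL

lemma psiC_det : psiC.det = 1/3 := by
  rw [ContinuousLinearMap.det]
  rw [show (psiC : (ℝ × ℝ) →ₗ[ℝ] (ℝ × ℝ)) = psiL from rfl]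
  rw [psiL, LinearMap.det_toLin, Matrix.det_fin_two_of]
  norm_num

lemma T_eq_img : T = psiC '' Dl := by
  ext ⟨x, y⟩
  constructor
  · rintro ⟨h1, h2, h3⟩
    dsimp at h1 h2 h3
    refine ⟨(2*x - y, 2*y - x), ⟨h1, h2, by dsimp; linarith⟩, ?_⟩
    rw [show psiC (2*x - y, 2*y - x) = psiL (2*x - y, 2*y - x) from rfl, psiL_apply]
    dsimp
    rw [Prod.mk.injEq]
    constructor <;> ring
  · rintro ⟨⟨u, v⟩, ⟨h1, h2, h3⟩, heq⟩
    rw [← heq, show psiC (u, v) = psiL (u, v) from rfl, psiL_apply]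
    dsimp at h1 h2 h3 ⊢
    refine ⟨by dsimp; linarith, by dsimp; linarith, by dsimp; linarith⟩

lemma T_int (p q : ℤ) :
    ∫ a in T, Complex.exp (2 * (π:ℂ) * Complex.I * (p * a.1 + q * a.2))
      = (3:ℂ)⁻¹ * Dcf (2*p + q) (p + 2*q) := by
  rw [T_eq_img]
  rw [integral_image_eq_integral_abs_det_fderiv_smul volume Dl_meas
    (fun x _ => psiC.hasFDerivAt.hasFDerivWithinAt) ?hinj]
  case hinj =>
    intro x _ y _ hxy
    have hx := psiL_apply x
    have hy := psiL_apply y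
    rw [show psiC x = psiL x from rfl, show psiC y = psiL y from rfl, hx, hy] at hxy
    have h1' : 2/3 * x.1 + 1/3 * x.2 = 2/3 * y.1 + 1/3 * y.2 := congrArg Prod.fst hxy
    have h2' : 1/3 * x.1 + 2/3 * x.2 = 1/3 * y.1 + 2/3 * y.2 := congrArg Prod.snd hxy
    have : x.1 = y.1 := by linarith
    have : x.2 = y.2 := by linarith
    exact Prod.ext ‹x.1 = y.1› ‹x.2 = y.2›
  have hpt : ∀ x : ℝ × ℝ, |psiC.det| • Complex.exp
        (2 * (π:ℂ) * Complex.I * (p * (psiC x).1 + q * (psiC x).2))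
      = (3:ℂ)⁻¹ * Complex.exp (c3 * ((2*p+q : ℤ) * x.1 + (p+2*q : ℤ) * x.2)) := by
    intro x
    rw [psiC_det, show psiC x = psiL x from rfl, psiL_apply,
      show |(1/3 : ℝ)| = (1/3 : ℝ) by norm_num, Complex.real_smul, c3]
    push_cast
    have h3 : ((1:ℂ)/3) = (3:ℂ)⁻¹ := by norm_num
    rw [h3]
    congr 2
    ring
  simp only [hpt]
  rw [MeasureTheory.integral_const_mul]
  congr 1
  rw [← Delta_int]

def Ef (n : ℤ × ℤ) (a : ℝ × ℝ) : ℂ :=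
  Complex.exp (2 * (π:ℂ) * Complex.I * ((n.1:ℂ) * a.1 + (n.2:ℂ) * a.2))

def wv (ν : ℤ × ℤ) : Fin 6 → ℤ × ℤ := fun k =>
  match k with
  | 0 => ν
  | 1 => (-ν.1, ν.1+ν.2)
  | 2 => (ν.1+ν.2, -ν.2)
  | 3 => (ν.2, -ν.1-ν.2)
  | 4 => (-ν.1-ν.2, ν.1)
  | 5 => (-ν.2, -ν.1)

lemma wv0 (ν : ℤ × ℤ) : wv ν 0 = ν := rfl
lemma wv1 (ν : ℤ × ℤ) : wv ν 1 = (-ν.1, ν.1+ν.2) := rfl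
lemma wv2 (ν : ℤ × ℤ) : wv ν 2 = (ν.1+ν.2, -ν.2) := rfl
lemma wv3 (ν : ℤ × ℤ) : wv ν 3 = (ν.2, -ν.1-ν.2) := rfl
lemma wv4 (ν : ℤ × ℤ) : wv ν 4 = (-ν.1-ν.2, ν.1) := rfl
lemma wv5 (ν : ℤ × ℤ) : wv ν 5 = (-ν.2, -ν.1) := rfl

lemma Ef_cont (n : ℤ × ℤ) : Continuous (Ef n) := by
  unfold Ef; fun_prop

lemma T_compact : IsCompact T := by
  rw [T_eq_img]; exact Dl_compact.image psiC.continuous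

lemma T_meas : MeasurableSet T := by
  rw [T_eq_img]
  exact (Dl_compact.image psiC.continuous).isClosed.measurableSet

lemma Ef_intOn (n : ℤ × ℤ) : IntegrableOn (Ef n) T :=
  (Ef_cont n).continuousOn.integrableOn_compact T_compact

lemma Ef_int (n : ℤ × ℤ) :
    ∫ a in T, Ef n a = (3:ℂ)⁻¹ * Dcf (2*n.1 + n.2) (n.1 + 2*n.2) := T_int n.1 n.2

lemma Ef_add (n n' : ℤ × ℤ) (a : ℝ × ℝ) : Ef n a * Ef n' a = Ef (n + n') a := by
  rw [Ef, Ef, Ef, ← Complex.exp_add]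
  congr 1
  rw [Prod.fst_add, Prod.snd_add]
  push_cast
  ring

lemma Ef_conj (n : ℤ × ℤ) (a : ℝ × ℝ) : (starRingEnd ℂ) (Ef n a) = Ef (-n) a := by
  rw [Ef, Ef, ← Complex.exp_conj]
  congr 1
  rw [Prod.fst_neg, Prod.snd_neg]
  simp only [map_mul, map_add, Complex.conj_I, Complex.conj_ofReal, map_intCast,
    map_ofNat]
  push_cast
  ring

lemma orbit_int (ν : ℤ × ℤ) :
    ∑ k : Fin 6, ∫ a in T, Ef (wv ν k) a = if ν = 0 then 1 else 0 := by
  have hkey := key (2*ν.1+ν.2) (ν.1+2*ν.2) ⟨ν.1+ν.2, by ring⟩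
  rw [Fin.sum_univ_six]
  simp only [wv0, wv1, wv2, wv3, wv4, wv5]
  rw [Ef_int, Ef_int, Ef_int, Ef_int, Ef_int, Ef_int]
  dsimp only
  rw [show 2*(-ν.1)+(ν.1+ν.2) = (ν.1+2*ν.2) - (2*ν.1+ν.2) from by ring,
      show (-ν.1)+2*(ν.1+ν.2) = (ν.1+2*ν.2) from by ring,
      show 2*(ν.1+ν.2)+(-ν.2) = (2*ν.1+ν.2) from by ring,
      show (ν.1+ν.2)+2*(-ν.2) = (2*ν.1+ν.2) - (ν.1+2*ν.2) from by ring,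
      show 2*ν.2+(-ν.1-ν.2) = (ν.1+2*ν.2) - (2*ν.1+ν.2) from by ring,
      show ν.2+2*(-ν.1-ν.2) = -(2*ν.1+ν.2) from by ring,
      show 2*(-ν.1-ν.2)+ν.1 = -(ν.1+2*ν.2) from by ring,
      show (-ν.1-ν.2)+2*ν.1 = (2*ν.1+ν.2) - (ν.1+2*ν.2) from by ring,
      show 2*(-ν.2)+(-ν.1) = -(ν.1+2*ν.2) from by ring,
      show (-ν.2)+2*(-ν.1) = -(2*ν.1+ν.2) from by ring]
  by_cases hν : ν = 0
  · rw [if_pos hν]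
    rw [if_pos (by subst hν; simp)] at hkey
    linear_combination (3:ℂ)⁻¹ * hkey
  · rw [if_neg hν]
    have hne : ¬(2*ν.1+ν.2 = 0 ∧ ν.1+2*ν.2 = 0) := by
      intro ⟨ha, hb⟩
      apply hν
      have : ν.1 = 0 ∧ ν.2 = 0 := by omega
      exact Prod.ext this.1 this.2
    rw [if_neg hne] at hkey
    linear_combination (3:ℂ)⁻¹ * hkey

lemma Cfun_eq (l : ℕ × ℕ) (a : ℝ × ℝ) :
    Cfun l a = (hwt l : ℂ)⁻¹ * ∑ j : Fin 6, Ef (wv ((l.1:ℤ),(l.2:ℤ)) j) a := by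
  rw [Cfun, Fin.sum_univ_six]
  simp only [wv0, wv1, wv2, wv3, wv4, wv5, Ef]
  push_cast
  ring_nf

lemma regroup (l1 l2 m1 m2 : ℤ) (a : ℝ × ℝ) :
    (∑ j : Fin 6, Ef (wv (l1, l2) j) a) * (∑ k : Fin 6, Ef (-(wv (m1, m2) k)) a)
      = ∑ u : Fin 6, ∑ k : Fin 6, Ef (wv (wv (l1, l2) u - (m1, m2)) k) a := by
  rw [Finset.sum_mul_sum]
  simp only [Ef_add, wv0, wv1, wv2, wv3, wv4, wv5, Fin.sum_univ_six]
  simp only [Prod.mk_add_mk, Prod.neg_mk, Prod.mk_sub_mk, Prod.fst_sub, Prod.snd_sub,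
    Prod.fst_neg, Prod.snd_neg, Prod.fst_add, Prod.snd_add]
  ring_nf

end A2O

/-- Continuous orthogonality of the symmetric orbit functions of `A₂` on
the fundamental domain `T`. -/
theorem Cfun_orthogonality (l m : ℕ × ℕ) :
    ∫ a in T, Cfun l a * (starRingEnd ℂ) (Cfun m a) =
      (if l = m then (1 : ℂ) else 0) / (hwt l : ℂ) := by
  classical
  set lz : ℤ × ℤ := ((l.1:ℤ), (l.2:ℤ)) with hlz
  set mz : ℤ × ℤ := ((m.1:ℤ), (m.2:ℤ)) with hmz
  have expand : ∀ a : ℝ × ℝ, Cfun l a * (starRingEnd ℂ) (Cfun m a)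
      = ((hwt l : ℂ) * (hwt m : ℂ))⁻¹ *
          ∑ u : Fin 6, ∑ k : Fin 6, A2O.Ef (A2O.wv (A2O.wv lz u - mz) k) a := by
    intro a
    rw [A2O.Cfun_eq l, A2O.Cfun_eq m, map_mul, map_inv₀, map_natCast, map_sum]
    simp only [A2O.Ef_conj]
    rw [mul_mul_mul_comm, ← mul_inv, hlz, hmz, A2O.regroup]
  simp only [expand]
  rw [MeasureTheory.integral_const_mul]
  rw [MeasureTheory.integral_finset_sum _ (fun u _ => by
    apply MeasureTheory.integrable_finset_sum
    intro k _
    exact A2O.Ef_intOn _)]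
  have hswap : ∀ u : Fin 6, (∫ a in T, ∑ k : Fin 6, A2O.Ef (A2O.wv (A2O.wv lz u - mz) k) a)
      = ∑ k : Fin 6, ∫ a in T, A2O.Ef (A2O.wv (A2O.wv lz u - mz) k) a := by
    intro u
    exact MeasureTheory.integral_finset_sum _ (fun k _ => A2O.Ef_intOn _)
  simp only [hswap, A2O.orbit_int]
  rw [Fin.sum_univ_six]
  simp only [A2O.wv0, A2O.wv1, A2O.wv2, A2O.wv3, A2O.wv4, A2O.wv5, Prod.mk_sub_mk,
    Prod.mk_eq_zero, Prod.fst_sub, Prod.snd_sub, hlz, hmz]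
  by_cases hlm : l = m
  · subst hlm
    rw [if_pos rfl]
    rw [if_pos (by omega : (l.1:ℤ) - l.1 = 0 ∧ (l.2:ℤ) - l.2 = 0)]
    by_cases h1 : l.1 = 0 <;> by_cases h2 : l.2 = 0
    · rw [if_pos (by omega), if_pos (by omega), if_pos (by omega), if_pos (by omega),
        if_pos (by omega), hwt, if_pos ⟨h1, h2⟩]
      norm_num
    · rw [if_pos (by omega), if_neg (by omega), if_neg (by omega), if_neg (by omega),
        if_neg (by omega), hwt, if_neg (by tauto), if_pos (by tauto)]
      norm_num
    · rw [if_neg (by omega), if_pos (by omega), if_neg (by omega), if_neg (by omega),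
        if_neg (by omega), hwt, if_neg (by tauto), if_pos (by tauto)]
      norm_num
    · rw [if_neg (by omega), if_neg (by omega), if_neg (by omega), if_neg (by omega),
        if_neg (by omega), hwt, if_neg (by tauto), if_neg (by tauto)]
      norm_num
  · rw [if_neg hlm]
    have hne : ¬(l.1 = m.1 ∧ l.2 = m.2) := fun h => hlm (Prod.ext h.1 h.2)
    rw [if_neg (by omega), if_neg (by omega), if_neg (by omega), if_neg (by omega),
      if_neg (by omega), if_neg (by omega)]
    simp

end
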